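/- arXiv:0809.2623 — 2 statements merged into one kernel-verified Lean document; each statement's English description precedes it below -/
import Mathlib

section
/- For every n ≥ 4, the radio number of the gear graph G_n equals 4n + 2, i.e., rn(G_n) = 4n + 2. -/
/-- A radio labeling of a graph `G` is an injective assignment of positive
integers to the vertices such that `d(u,v) + |c(u) - c(v)| ≥ diam(G) + 1`
for all pairs of distinct vertices. -/
def IsRadioLabeling {V : Type*} [Fintype V] (G : SimpleGraph V) (c : V → ℕ) : Prop :=
  Function.Injective c ∧ (∀ v, 1 ≤ c v) ∧
    ∀ u v : V, u ≠ v →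
      (G.diam : ℤ) + 1 ≤ (G.dist u v : ℤ) + |(c u : ℤ) - (c v : ℤ)|

/-- The radio number of `G`: the least possible span (maximum label used)
of a radio labeling of `G`. -/
noncomputable def radioNumber {V : Type*} [Fintype V] (G : SimpleGraph V) : ℕ :=
  sInf {s : ℕ | ∃ c : V → ℕ, IsRadioLabeling G c ∧ s = Finset.univ.sup c}

/-- The gear graph `G_n`: the center `none` is adjacent to each `v i = some (Sum.inl i)`,
and each `w i = some (Sum.inr i)` is adjacent to `v i` and `v (i+1)` (indices mod `n`);
thus the `v`'s and `w`'s alternate around a cycle of length `2n`. -/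
def gearGraph (n : ℕ) : SimpleGraph (Option (Fin n ⊕ Fin n)) :=
  SimpleGraph.fromRel (fun u v =>
    (∃ i : Fin n, u = none ∧ v = some (Sum.inl i)) ∨
    (∃ i j : Fin n, u = some (Sum.inr i) ∧ v = some (Sum.inl j) ∧
      (j = i ∨ (i.val + 1) % n = j.val)))

namespace GearAux

variable {n : ℕ}

abbrev VG (n : ℕ) := Option (Fin n ⊕ Fin n)
abbrev zc : VG n := none
abbrev vv (i : Fin n) : VG n := some (Sum.inl i)
abbrev ww (i : Fin n) : VG n := some (Sum.inr i)

lemma succ_mod (i n : ℕ) (hi : i < n) : (i + 1) % n = if i + 1 = n then 0 else i + 1 := by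
  split_ifs with h
  · simp [h]
  · exact Nat.mod_eq_of_lt (by omega)

/-! ### Adjacency facts -/

lemma adj_zv (i : Fin n) : (gearGraph n).Adj zc (vv i) := by
  simp [gearGraph, SimpleGraph.fromRel_adj]

lemma adj_wv (i : Fin n) : (gearGraph n).Adj (ww i) (vv i) := by
  simp [gearGraph, SimpleGraph.fromRel_adj]

lemma adj_z_cases (y) (h : (gearGraph n).Adj zc y) : ∃ i : Fin n, y = vv i := by
  simp only [gearGraph, SimpleGraph.fromRel_adj] at h
  obtain ⟨hne, h | h⟩ := h
  · rcases h with ⟨i, -, hv⟩ | ⟨i, j, hu, -⟩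
    · exact ⟨i, hv⟩
    · simp at hu
  · rcases h with ⟨i, hu, -⟩ | ⟨i, j, -, hv, -⟩ <;> simp_all

lemma adj_v_cases (j : Fin n) (y) (h : (gearGraph n).Adj (vv j) y) :
    y = zc ∨ ∃ i : Fin n, y = ww i ∧ (j = i ∨ (i.val + 1) % n = j.val) := by
  simp only [gearGraph, SimpleGraph.fromRel_adj] at h
  obtain ⟨hne, h | h⟩ := h
  · rcases h with ⟨i, hu, -⟩ | ⟨i, j', hu, -⟩ <;> simp_all
  · rcases h with ⟨i, hy, hv⟩ | ⟨i, j', hy, hv, hcond⟩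
    · exact Or.inl hy
    · simp only [Option.some.injEq, Sum.inl.injEq] at hv
      subst hv
      exact Or.inr ⟨i, hy, hcond⟩

lemma adj_w_cases (i : Fin n) (y) (h : (gearGraph n).Adj (ww i) y) :
    ∃ j : Fin n, y = vv j ∧ (j = i ∨ (i.val + 1) % n = j.val) := by
  simp only [gearGraph, SimpleGraph.fromRel_adj] at h
  obtain ⟨hne, h | h⟩ := h
  · rcases h with ⟨i', hu, -⟩ | ⟨i', j, hu, hv, hcond⟩
    · simp at hu
    · simp only [Option.some.injEq, Sum.inr.injEq] at hu
      subst hu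
      exact ⟨j, hv, hcond⟩
  · rcases h with ⟨i', hu, hv⟩ | ⟨i', j, hu, hv, hcond⟩ <;> simp_all

/-! ### Walks and distance upper bounds -/

def wvz (j : Fin n) : (gearGraph n).Walk (vv j) zc := (adj_zv j).symm.toWalk
def wwz (i : Fin n) : (gearGraph n).Walk (ww i) zc := SimpleGraph.Walk.cons (adj_wv i) (wvz i)

@[simp] lemma wvz_length (j : Fin n) : (wvz j : (gearGraph n).Walk _ _).length = 1 := rfl
@[simp] lemma wwz_length (i : Fin n) : (wwz i : (gearGraph n).Walk _ _).length = 2 := rfl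

def toZ : (u : VG n) → (gearGraph n).Walk u zc
  | none => SimpleGraph.Walk.nil
  | some (Sum.inl j) => wvz j
  | some (Sum.inr i) => wwz i

lemma toZ_length_le (u : VG n) : (toZ u).length ≤ 2 := by
  rcases u with _ | j | i <;> simp [toZ]

lemma gear_connected : (gearGraph n).Connected := by
  rw [SimpleGraph.connected_iff]
  refine ⟨fun u v => ?_, ⟨none⟩⟩
  exact ⟨(toZ u).append (toZ v).reverse⟩

def walkUV (u v : VG n) : (gearGraph n).Walk u v := (toZ u).append (toZ v).reverse

lemma walkUV_length_le (u v : VG n) : (walkUV u v).length ≤ 4 := by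
  have h1 := toZ_length_le u
  have h2 := toZ_length_le v
  simp only [walkUV, SimpleGraph.Walk.length_append, SimpleGraph.Walk.length_reverse]
  omega

/-- weight function for the lower-bound counting -/
def g : VG n → ℕ
  | none => 0
  | some (Sum.inl _) => 1
  | some (Sum.inr _) => 2

lemma dist_le_g (u v : VG n) : (gearGraph n).dist u v ≤ g u + g v := by
  have key : ((toZ u).append (toZ v).reverse).length = (toZ u).length + (toZ v).length := by
    simp
  have hd := SimpleGraph.dist_le ((toZ u).append (toZ v).reverse)
  rw [key] at hd
  rcases u with _ | j | i <;> rcases v with _ | j' | i' <;>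
    simp only [g] <;> simp [toZ] at hd ⊢ <;> omega

/-! ### Distance lower bounds via walk destruction -/

lemma len_zw (i : Fin n) (p : (gearGraph n).Walk zc (ww i)) : 2 ≤ p.length := by
  cases p with
  | cons h q =>
    obtain ⟨a, rfl, -⟩ := adj_z_cases _ h
    cases q with
    | cons h2 r => simp [SimpleGraph.Walk.length_cons]

lemma len_wv (i j : Fin n) (h1 : j ≠ i) (h2 : (i.val + 1) % n ≠ j.val)
    (p : (gearGraph n).Walk (ww i) (vv j)) : 3 ≤ p.length := by
  cases p with
  | cons h q =>
    obtain ⟨a, rfl, ha⟩ := adj_w_cases _ _ h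
    cases q with
    | nil => exact absurd ha (by rintro (rfl | hc) <;> simp_all)
    | cons h2 r =>
      rcases adj_v_cases _ _ h2 with rfl | ⟨b, rfl, hb⟩ <;>
      · cases r with
        | cons h3 s => simp [SimpleGraph.Walk.length_cons]

lemma len_ww (i k : Fin n) (h1 : k ≠ i) (h2 : (i.val + 1) % n ≠ k.val)
    (h3 : (k.val + 1) % n ≠ i.val)
    (p : (gearGraph n).Walk (ww i) (ww k)) : 4 ≤ p.length := by
  cases p with
  | nil => exact absurd rfl h1
  | cons hadj1 q =>
    obtain ⟨a, rfl, ha⟩ := adj_w_cases _ _ hadj1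
    cases q with
    | cons hadj2 r =>
      rcases adj_v_cases _ _ hadj2 with rfl | ⟨b, rfl, hb⟩
      · cases r with
        | cons hadj3 s =>
          obtain ⟨a', rfl, -⟩ := adj_z_cases _ hadj3
          cases s with
          | cons hadj4 t => simp [SimpleGraph.Walk.length_cons]
      · cases r with
        | nil =>
          -- here b = k
          have hiv := i.isLt
          have hkv := k.isLt
          have hav := a.isLt
          rw [succ_mod i.val n hiv] at ha h2
          rw [succ_mod k.val n hkv] at hb h3
          have hik : i.val ≠ k.val := fun hc => h1 (Fin.ext hc.symm)
          rcases ha with rfl | ha <;> rcases hb with hb | hb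
          · exact absurd hb.symm h1
          · split_ifs at hb h3 <;> omega
          · have hak : a.val = k.val := congrArg Fin.val hb
            split_ifs at ha h2 <;> omega
          · split_ifs at ha hb h2 h3 <;> omega
        | cons hadj4 t =>
          obtain ⟨a', rfl, -⟩ := adj_w_cases _ _ hadj4
          cases t with
          | cons hadj5 s => simp [SimpleGraph.Walk.length_cons]

lemma dist_zw (i : Fin n) : 2 ≤ (gearGraph n).dist zc (ww i) := by
  obtain ⟨p, hp⟩ := (gear_connected zc (ww i)).exists_walk_length_eq_dist
  rw [← hp]; exact len_zw i p

lemma dist_wv (i j : Fin n) (h1 : j ≠ i) (h2 : (i.val + 1) % n ≠ j.val) :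
    3 ≤ (gearGraph n).dist (ww i) (vv j) := by
  obtain ⟨p, hp⟩ := (gear_connected (ww i) (vv j)).exists_walk_length_eq_dist
  rw [← hp]; exact len_wv i j h1 h2 p

lemma dist_pos {u v : VG n} (h : u ≠ v) : 1 ≤ (gearGraph n).dist u v :=
  gear_connected.pos_dist_of_ne h

/-! ### Diameter -/

lemma ediam_eq (hn : 4 ≤ n) : (gearGraph n).ediam = 4 := by
  apply le_antisymm
  · apply SimpleGraph.ediam_le_of_edist_le
    intro u v
    calc (gearGraph n).edist u v ≤ (walkUV u v).length := SimpleGraph.edist_le _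
      _ ≤ 4 := by exact_mod_cast walkUV_length_le u v
  · have h0 : (0 : ℕ) < n := by omega
    have h2 : (2 : ℕ) < n := by omega
    refine le_trans ?_ (SimpleGraph.edist_le_ediam
      (u := ww (⟨0, h0⟩ : Fin n)) (v := ww ⟨2, h2⟩))
    rw [SimpleGraph.edist_eq_sInf]
    refine le_sInf ?_
    rintro x ⟨p, rfl⟩
    have h4 : 4 ≤ p.length := by
      apply len_ww
      · intro h
        have : (2 : ℕ) = 0 := congrArg Fin.val h
        omega
      · have hv : ((⟨2, h2⟩ : Fin n) : ℕ) = 2 := rfl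
        have hv0 : ((⟨0, h0⟩ : Fin n) : ℕ) = 0 := rfl
        rw [hv, hv0, succ_mod 0 n (by omega)]
        split_ifs <;> omega
      · have hv : ((⟨2, h2⟩ : Fin n) : ℕ) = 2 := rfl
        have hv0 : ((⟨0, h0⟩ : Fin n) : ℕ) = 0 := rfl
        rw [hv, hv0, succ_mod 2 n (by omega)]
        split_ifs <;> omega
    have : (4 : ℕ∞) ≤ (p.length : ℕ∞) := by exact_mod_cast h4
    exact this

lemma diam_eq (hn : 4 ≤ n) : (gearGraph n).diam = 4 := by
  have := ediam_eq (n := n) hn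
  rw [SimpleGraph.diam, this]
  rfl

end GearAux

namespace GearAux

/-! ### The labeling -/

def cL (n : ℕ) : VG n → ℕ
  | none => 1
  | some (Sum.inl j) => if 3 ≤ j.val then 6 + 4 * (j.val - 3) else 6 + 4 * (j.val + n - 3)
  | some (Sum.inr i) => 4 + 4 * i.val

lemma cL_inj (hn : 4 ≤ n) : Function.Injective (cL n) := by
  intro a b h
  rcases a with _ | j | i <;> rcases b with _ | j' | i' <;>
    simp only [cL] at h ⊢ <;> try split_ifs at h
  all_goals first
    | rfl
    | omega
    | (exact congrArg _ (congrArg _ (Fin.ext (by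
        have := j.isLt; have := j'.isLt; omega))))
    | (exact congrArg _ (congrArg _ (Fin.ext (by
        have := i.isLt; have := i'.isLt; omega))))

lemma sup_cL (hn : 4 ≤ n) : Finset.univ.sup (cL n) = 4 * n + 2 := by
  apply le_antisymm
  · apply Finset.sup_le
    intro u _
    rcases u with _ | j | i
    · simp [cL]
    · have := j.isLt; simp only [cL]; split_ifs <;> omega
    · have := i.isLt; simp only [cL]; omega
  · have h2 : (2 : ℕ) < n := by omega
    have hval : cL n (vv ⟨2, h2⟩) = 4 * n + 2 := by
      have : ¬ (3 ≤ ((⟨2, h2⟩ : Fin n) : ℕ)) := by norm_num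
      simp only [cL, if_neg this]
      omega
    calc 4 * n + 2 = cL n (vv ⟨2, h2⟩) := hval.symm
      _ ≤ _ := Finset.le_sup (Finset.mem_univ _)

lemma cL_radio (hn : 4 ≤ n) : IsRadioLabeling (gearGraph n) (cL n) := by
  refine ⟨cL_inj hn, ?_, ?_⟩
  · rintro (_ | j | i) <;> simp only [cL] <;> (try split_ifs) <;> omega
  · intro u v huv
    rw [diam_eq hn]
    have hd0 : (0 : ℤ) ≤ ((gearGraph n).dist u v : ℤ) := Int.natCast_nonneg _
    rcases u with _ | j | i <;> rcases v with _ | j' | i'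
    · exact absurd rfl huv
    · -- z, v j'
      have hj' := j'.isLt
      have habs : (5:ℤ) ≤ |(cL n none : ℤ) - cL n (some (Sum.inl j'))| := by
        rw [le_abs]; simp only [cL]; split_ifs <;> push_cast <;> omega
      push_cast
      linarith
    · -- z, w i'
      have hd : 2 ≤ (gearGraph n).dist none (some (Sum.inr i')) := dist_zw i'
      have hd' : (2:ℤ) ≤ ((gearGraph n).dist none (some (Sum.inr i')) : ℤ) := by exact_mod_cast hd
      have habs : (3:ℤ) ≤ |(cL n none : ℤ) - cL n (some (Sum.inr i'))| := by
        rw [le_abs]; simp only [cL]; push_cast; omega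
      push_cast
      linarith
    · -- v j, z
      have hj := j.isLt
      have habs : (5:ℤ) ≤ |(cL n (some (Sum.inl j)) : ℤ) - cL n none| := by
        rw [le_abs]; simp only [cL]; split_ifs <;> push_cast <;> omega
      push_cast
      linarith
    · -- v j, v j'
      have hj := j.isLt; have hj' := j'.isLt
      have hne : j.val ≠ j'.val := by
        intro hc; exact huv (congrArg _ (congrArg _ (Fin.ext hc)))
      have hd : 1 ≤ (gearGraph n).dist (some (Sum.inl j)) (some (Sum.inl j')) := dist_pos huv
      have hd' : (1:ℤ) ≤ ((gearGraph n).dist (some (Sum.inl j)) (some (Sum.inl j')) : ℤ) := by exact_mod_cast hd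
      have habs : (4:ℤ) ≤ |(cL n (some (Sum.inl j)) : ℤ) - cL n (some (Sum.inl j'))| := by
        rw [le_abs]; simp only [cL]; split_ifs <;> push_cast <;> omega
      push_cast
      linarith
    · -- v j, w i'
      have hj := j.isLt; have hi' := i'.isLt
      by_cases h6 : (6:ℤ) ≤ |(cL n (some (Sum.inl j)) : ℤ) - cL n (some (Sum.inr i'))|
      · push_cast
        linarith
      · push_neg at h6
        have h6' := abs_lt.mp h6
        simp only [cL] at h6'
        have hcond : j.val ≠ i'.val ∧ (i'.val + 1) % n ≠ j.val := by
          rw [succ_mod i'.val n hi']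
          split_ifs at h6' ⊢ <;> push_cast at h6' <;> constructor <;> omega
        have hd : 3 ≤ (gearGraph n).dist (some (Sum.inl j)) (some (Sum.inr i')) := by
          rw [SimpleGraph.dist_comm]
          exact dist_wv i' j (fun hc => hcond.1 (congrArg Fin.val hc)) hcond.2
        have hd' : (3:ℤ) ≤ ((gearGraph n).dist (some (Sum.inl j)) (some (Sum.inr i')) : ℤ) := by exact_mod_cast hd
        have habs : (2:ℤ) ≤ |(cL n (some (Sum.inl j)) : ℤ) - cL n (some (Sum.inr i'))| := by
          rw [le_abs]; simp only [cL]; split_ifs <;> push_cast <;> omega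
        push_cast
        linarith
    · -- w i, z
      have hd : 2 ≤ (gearGraph n).dist (some (Sum.inr i)) none := by
        rw [SimpleGraph.dist_comm]; exact dist_zw i
      have hd' : (2:ℤ) ≤ ((gearGraph n).dist (some (Sum.inr i)) none : ℤ) := by exact_mod_cast hd
      have habs : (3:ℤ) ≤ |(cL n (some (Sum.inr i)) : ℤ) - cL n none| := by
        rw [le_abs]; simp only [cL]; push_cast; omega
      push_cast
      linarith
    · -- w i, v j'
      have hj' := j'.isLt; have hi := i.isLt
      by_cases h6 : (6:ℤ) ≤ |(cL n (some (Sum.inr i)) : ℤ) - cL n (some (Sum.inl j'))|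
      · push_cast
        linarith
      · push_neg at h6
        have h6' := abs_lt.mp h6
        simp only [cL] at h6'
        have hcond : j'.val ≠ i.val ∧ (i.val + 1) % n ≠ j'.val := by
          rw [succ_mod i.val n hi]
          split_ifs at h6' ⊢ <;> push_cast at h6' <;> constructor <;> omega
        have hd : 3 ≤ (gearGraph n).dist (some (Sum.inr i)) (some (Sum.inl j')) :=
          dist_wv i j' (fun hc => hcond.1 (congrArg Fin.val hc)) hcond.2
        have hd' : (3:ℤ) ≤ ((gearGraph n).dist (some (Sum.inr i)) (some (Sum.inl j')) : ℤ) := by exact_mod_cast hd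
        have habs : (2:ℤ) ≤ |(cL n (some (Sum.inr i)) : ℤ) - cL n (some (Sum.inl j'))| := by
          rw [le_abs]; simp only [cL]; split_ifs <;> push_cast <;> omega
        push_cast
        linarith
    · -- w i, w i'
      have hne : i.val ≠ i'.val := by
        intro hc; exact huv (congrArg _ (congrArg _ (Fin.ext hc)))
      have hd : 1 ≤ (gearGraph n).dist (some (Sum.inr i)) (some (Sum.inr i')) := dist_pos huv
      have hd' : (1:ℤ) ≤ ((gearGraph n).dist (some (Sum.inr i)) (some (Sum.inr i')) : ℤ) := by exact_mod_cast hd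
      have habs : (4:ℤ) ≤ |(cL n (some (Sum.inr i)) : ℤ) - cL n (some (Sum.inr i'))| := by
        rw [le_abs]; simp only [cL]; push_cast; omega
      push_cast
      linarith

end GearAux

namespace GearAux

lemma g_ge_one (u : VG n) (h : u ≠ none) : 1 ≤ g u := by
  rcases u with _ | j | i
  · exact absurd rfl h
  · simp [g]
  · simp [g]

lemma sum_g : ∑ u : VG n, (g u : ℤ) = 3 * n := by
  rw [Fintype.sum_option]
  rw [Fintype.sum_sum_type]
  simp [g, Finset.sum_const, Finset.card_univ]
  push_cast
  ring

theorem lower_bound (hn : 4 ≤ n) (c : VG n → ℕ)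
    (hc : IsRadioLabeling (gearGraph n) c) : 4 * n + 2 ≤ Finset.univ.sup c := by
  obtain ⟨hinj, hpos, hcond⟩ := hc
  have hdiam := diam_eq (n := n) hn
  rw [hdiam] at hcond
  have hcard : Fintype.card (VG n) = 2 * n + 1 := by simp; omega
  letI : LinearOrder (VG n) := LinearOrder.lift' c hinj
  let e := monoEquivOfFin (VG n) hcard
  have hmono : ∀ {i j : Fin (2 * n + 1)}, i < j → c (e i) < c (e j) := by
    intro i j h
    exact e.strictMono h
  set x : ℕ → VG n := fun k => e ⟨min k (2 * n), by omega⟩ with hxdef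
  have hxlt : ∀ k, k < 2 * n → c (x k) < c (x (k + 1)) := by
    intro k hk
    apply hmono
    rw [Fin.mk_lt_mk]
    omega
  have hxne : ∀ k, k < 2 * n → x k ≠ x (k + 1) :=
    fun k hk h => (hxlt k hk).ne (congrArg c h)
  set f : ℕ → ℤ := fun k => (c (x k) : ℤ) with hfdef
  have gap : ∀ k ∈ Finset.range (2 * n),
      (5 : ℤ) ≤ ((gearGraph n).dist (x k) (x (k + 1)) : ℤ) + (f (k + 1) - f k) := by
    intro k hk
    rw [Finset.mem_range] at hk
    have h := hcond (x k) (x (k + 1)) (hxne k hk)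
    have habs : |(c (x k) : ℤ) - c (x (k + 1))| = f (k + 1) - f k := by
      rw [abs_sub_comm]
      refine abs_of_nonneg ?_
      show (0 : ℤ) ≤ (c (x (k + 1)) : ℤ) - (c (x k) : ℤ)
      have := hxlt k hk
      push_cast
      omega
    rw [habs] at h
    push_cast at h
    linarith
  have tel : ∑ i ∈ Finset.range (2 * n), (f (i + 1) - f i) = f (2 * n) - f 0 :=
    Finset.sum_range_sub f (2 * n)
  have sum5 : (10 : ℤ) * n ≤
      ∑ i ∈ Finset.range (2 * n),
        (((gearGraph n).dist (x i) (x (i + 1)) : ℤ) + (f (i + 1) - f i)) := by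
    calc (10 : ℤ) * n = ∑ _i ∈ Finset.range (2 * n), (5 : ℤ) := by
          rw [Finset.sum_const, Finset.card_range]; push_cast; ring
      _ ≤ _ := Finset.sum_le_sum gap
  have sumd : ∑ i ∈ Finset.range (2 * n), ((gearGraph n).dist (x i) (x (i + 1)) : ℤ) ≤
      ∑ i ∈ Finset.range (2 * n), ((g (x i) : ℤ) + (g (x (i + 1)) : ℤ)) := by
    refine Finset.sum_le_sum fun i _ => ?_
    have := dist_le_g (x i) (x (i + 1))
    push_cast
    omega
  have hsumg_all : ∑ i ∈ Finset.range (2 * n + 1), (g (x i) : ℤ) = 3 * n := by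
    have h1 : ∑ i ∈ Finset.range (2 * n + 1), (g (x i) : ℤ)
        = ∑ i : Fin (2 * n + 1), (g (e i) : ℤ) := by
      rw [← Fin.sum_univ_eq_sum_range]
      refine Finset.sum_congr rfl fun i _ => ?_
      congr 2
      simp only [hxdef]
      congr 1
      exact Fin.ext (min_eq_left (by omega))
    rw [h1, ← sum_g (n := n)]
    exact Fintype.sum_equiv e.toEquiv _ _ (fun i => rfl)
  have shift1 : ∑ i ∈ Finset.range (2 * n), (g (x i) : ℤ)
      = 3 * n - g (x (2 * n)) := by
    have := Finset.sum_range_succ (fun i => (g (x i) : ℤ)) (2 * n)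
    rw [hsumg_all] at this
    linarith
  have shift2 : ∑ i ∈ Finset.range (2 * n), (g (x (i + 1)) : ℤ)
      = 3 * n - g (x 0) := by
    have := Finset.sum_range_succ' (fun i => (g (x i) : ℤ)) (2 * n)
    rw [hsumg_all] at this
    linarith
  have hends : (1 : ℤ) ≤ (g (x 0) : ℤ) + g (x (2 * n)) := by
    have hne : x 0 ≠ x (2 * n) := by
      intro h
      have : c (x 0) < c (x (2 * n)) := by
        apply hmono; rw [Fin.mk_lt_mk]; omega
      exact this.ne (congrArg c h)
    by_cases h0 : x 0 = none
    · have h2 : x (2 * n) ≠ none := fun h => hne (h0.trans h.symm)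
      have := g_ge_one (x (2 * n)) h2
      have : (1 : ℤ) ≤ (g (x (2 * n)) : ℤ) := by exact_mod_cast this
      have hg0 : (0 : ℤ) ≤ (g (x 0) : ℤ) := Int.natCast_nonneg _
      linarith
    · have := g_ge_one (x 0) h0
      have : (1 : ℤ) ≤ (g (x 0) : ℤ) := by exact_mod_cast this
      have hg2 : (0 : ℤ) ≤ (g (x (2 * n)) : ℤ) := Int.natCast_nonneg _
      linarith
  have hsplit : ∑ i ∈ Finset.range (2 * n), ((g (x i) : ℤ) + (g (x (i + 1)) : ℤ))
      = (3 * n - g (x 0)) + (3 * n - g (x (2 * n))) := by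
    rw [Finset.sum_add_distrib, shift1, shift2]
    ring
  have hsum_split : ∑ i ∈ Finset.range (2 * n),
        (((gearGraph n).dist (x i) (x (i + 1)) : ℤ) + (f (i + 1) - f i))
      = (∑ i ∈ Finset.range (2 * n), ((gearGraph n).dist (x i) (x (i + 1)) : ℤ))
        + (f (2 * n) - f 0) := by
    rw [Finset.sum_add_distrib, tel]
  have hf0 : (1 : ℤ) ≤ f 0 := by
    show (1 : ℤ) ≤ (c (x 0) : ℤ)
    exact_mod_cast hpos (x 0)
  have hfeq : f (2 * n) = (c (x (2 * n)) : ℤ) := rfl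
  have hfinal : (4 * n + 2 : ℤ) ≤ (c (x (2 * n)) : ℤ) := by
    rw [hsum_split] at sum5
    rw [hsplit] at sumd
    linarith
  have hfinal' : 4 * n + 2 ≤ c (x (2 * n)) := by exact_mod_cast hfinal
  exact le_trans hfinal' (Finset.le_sup (Finset.mem_univ _))

end GearAux

/-- For `n ≥ 4`, the radio number of the gear graph `G_n` is `4n + 2`. -/
theorem radioNumber_gear (n : ℕ) (hn : 4 ≤ n) :
    radioNumber (gearGraph n) = 4 * n + 2 := by
  have hmem : 4 * n + 2 ∈
      {s : ℕ | ∃ c, IsRadioLabeling (gearGraph n) c ∧ s = Finset.univ.sup c} :=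
    ⟨GearAux.cL n, GearAux.cL_radio hn, (GearAux.sup_cL hn).symm⟩
  rw [radioNumber]
  apply le_antisymm
  · exact Nat.sInf_le hmem
  · apply le_csInf ⟨_, hmem⟩
    rintro s ⟨c, hc, rfl⟩
    exact GearAux.lower_bound hn c hc
end

section
/- The radio number of the gear graph G_6 equals 26, i.e., rn(G_6) = 4·6 + 2 = 26. -/
abbrev GV := Option (Fin 6 ⊕ Fin 6)

instance : DecidableRel (gearGraph 6).Adj := fun u v =>
  decidable_of_iff' _ (SimpleGraph.fromRel_adj _ u v)

def D : GV → GV → ℕ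
  | none, none => 0
  | none, some (Sum.inl _) => 1
  | none, some (Sum.inr _) => 2
  | some (Sum.inl _), none => 1
  | some (Sum.inr _), none => 2
  | some (Sum.inl i), some (Sum.inl j) => if i = j then 0 else 2
  | some (Sum.inl i), some (Sum.inr j) => if i = j ∨ i.val = (j.val + 1) % 6 then 1 else 3
  | some (Sum.inr i), some (Sum.inl j) => if j = i ∨ j.val = (i.val + 1) % 6 then 1 else 3
  | some (Sum.inr i), some (Sum.inr j) =>
      if i = j then 0 else if (i.val + 1) % 6 = j.val ∨ (j.val + 1) % 6 = i.val then 2 else 4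

lemma D_self : ∀ u : GV, D u u = 0 := by decide
lemma D_eq_zero : ∀ u v : GV, D u v = 0 → u = v := by decide
lemma D_step : ∀ u v w : GV, (gearGraph 6).Adj u v → D u w ≤ D v w + 1 := by decide
lemma D_exists : ∀ u v : GV, D u v ≠ 0 → ∃ x, (gearGraph 6).Adj u x ∧ D x v + 1 ≤ D u v := by
  decide

lemma D_le_length : ∀ {u v : GV} (p : (gearGraph 6).Walk u v), D u v ≤ p.length := by
  intro u v p
  induction p with
  | nil => simp [D_self]
  | cons h p ih =>
    rename_i a b c
    calc D a c ≤ D b c + 1 := D_step a b c h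
    _ ≤ p.length + 1 := by omega
    _ = _ := by simp [SimpleGraph.Walk.length_cons]

lemma dist_le_D : ∀ n (u v : GV), D u v = n →
    (gearGraph 6).Reachable u v ∧ (gearGraph 6).dist u v ≤ D u v := by
  intro n
  induction n using Nat.strong_induction_on with
  | _ n ih =>
    intro u v hD
    rcases Nat.eq_zero_or_pos n with h0 | hpos
    · subst h0
      obtain rfl := D_eq_zero u v hD
      exact ⟨SimpleGraph.Reachable.refl u, by simp [SimpleGraph.dist_self]⟩
    · obtain ⟨x, hadj, hx⟩ := D_exists u v (by omega)
      obtain ⟨hr, hd⟩ := ih (D x v) (by omega) x v rfl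
      obtain ⟨p, hp⟩ := hr.exists_walk_length_eq_dist
      refine ⟨hadj.reachable.trans hr, ?_⟩
      calc (gearGraph 6).dist u v ≤ (SimpleGraph.Walk.cons hadj p).length :=
            SimpleGraph.dist_le _
        _ = p.length + 1 := by simp
        _ ≤ D u v := by omega

lemma reachable_all (u v : GV) : (gearGraph 6).Reachable u v :=
  (dist_le_D _ u v rfl).1

lemma dist_eq_D (u v : GV) : (gearGraph 6).dist u v = D u v := by
  refine le_antisymm (dist_le_D _ u v rfl).2 ?_
  obtain ⟨p, hp⟩ := (reachable_all u v).exists_walk_length_eq_dist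
  rw [← hp]
  exact D_le_length p

lemma D_le_four : ∀ u v : GV, D u v ≤ 4 := by decide

lemma diam_eq : (gearGraph 6).diam = 4 := by
  have hnetop : (gearGraph 6).ediam ≠ ⊤ := by
    obtain ⟨u, v, huv⟩ := SimpleGraph.exists_edist_eq_ediam_of_finite (G := gearGraph 6)
    rw [← huv, SimpleGraph.edist_ne_top_iff_reachable]
    exact reachable_all u v
  have h4 : (gearGraph 6).dist (some (Sum.inr 0)) (some (Sum.inr 2)) = 4 := by
    rw [dist_eq_D]; decide
  have hle : (gearGraph 6).diam ≤ 4 := by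
    obtain ⟨u, v, huv⟩ := SimpleGraph.exists_dist_eq_diam (G := gearGraph 6)
    rw [← huv, dist_eq_D]; exact D_le_four u v
  have hge : 4 ≤ (gearGraph 6).diam := h4 ▸ SimpleGraph.dist_le_diam hnetop
  omega

def cExp : GV → ℕ
  | none => 26
  | some (Sum.inl i) => ![16, 1, 13, 21, 10, 5] i
  | some (Sum.inr i) => ![7, 18, 8, 3, 19, 23] i

lemma cExp_cond : ∀ u v : GV, u ≠ v →
    (5 : ℤ) ≤ (D u v : ℤ) + |(cExp u : ℤ) - (cExp v : ℤ)| := by decide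

lemma isRadio_cExp : IsRadioLabeling (gearGraph 6) cExp := by
  refine ⟨by decide, by decide, ?_⟩
  intro u v huv
  rw [diam_eq, dist_eq_D]
  have := cExp_cond u v huv
  push_cast
  push_cast at this
  linarith

lemma sup_cExp : Finset.univ.sup cExp = 26 := by decide

def gw : GV → ℕ
  | none => 0
  | some (Sum.inl _) => 1
  | some (Sum.inr _) => 2

lemma D_le_gw : ∀ u v : GV, D u v ≤ gw u + gw v := by decide
lemma gw_sum : ∑ v : GV, (gw v : ℤ) = 18 := by decide
lemma gw_pos : ∀ u v : GV, u ≠ v → 1 ≤ gw u + gw v := by decide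
lemma card_GV : Fintype.card GV = 13 := by decide

lemma lower_bound : ∀ s ∈ {s : ℕ | ∃ c : GV → ℕ,
    IsRadioLabeling (gearGraph 6) c ∧ s = Finset.univ.sup c}, 26 ≤ s := by
  rintro s ⟨c, ⟨hinj, hpos, hcond⟩, rfl⟩
  letI : LinearOrder GV := LinearOrder.lift' c hinj
  let e := Fintype.orderIsoFinOfCardEq GV card_GV
  let x : Fin 13 → GV := fun i => e i
  have hxlt : ∀ i j : Fin 13, i < j → c (x i) < c (x j) := fun i j hij => e.strictMono hij
  have hxne : ∀ i j : Fin 13, i ≠ j → x i ≠ x j := fun i j hij h =>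
    hij (e.toEquiv.injective h)
  let f : ℕ → ℤ := fun n => if h : n < 13 then (c (x ⟨n, h⟩) : ℤ) else 0
  let gg : ℕ → ℤ := fun n => if h : n < 13 then (gw (x ⟨n, h⟩) : ℤ) else 0
  have key : ∀ i ∈ Finset.range 12, 5 - gg i - gg (i+1) ≤ f (i+1) - f i := by
    intro i hi
    have hi12 : i < 12 := Finset.mem_range.mp hi
    have h1 : i < 13 := by omega
    have h2 : i + 1 < 13 := by omega
    have hne : (⟨i, h1⟩ : Fin 13) ≠ ⟨i+1, h2⟩ := by simp [Fin.ext_iff]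
    have hab : x ⟨i, h1⟩ ≠ x ⟨i+1, h2⟩ := hxne _ _ hne
    have hlt : c (x ⟨i, h1⟩) < c (x ⟨i+1, h2⟩) := hxlt _ _ (by simp [Fin.lt_def])
    have hc := hcond _ _ hab
    rw [diam_eq, dist_eq_D] at hc
    have hD := D_le_gw (x ⟨i, h1⟩) (x ⟨i+1, h2⟩)
    have habs : |(c (x ⟨i, h1⟩) : ℤ) - c (x ⟨i+1, h2⟩)|
        = (c (x ⟨i+1, h2⟩) : ℤ) - c (x ⟨i, h1⟩) := by
      rw [abs_sub_comm, abs_of_nonneg (by omega)]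
    rw [habs] at hc
    show 5 - gg i - gg (i+1) ≤ f (i+1) - f i
    simp only [f, gg, dif_pos h1, dif_pos h2]
    push_cast at hc ⊢
    omega
  have tele : (∑ i ∈ Finset.range 12, (f (i+1) - f i)) = f 12 - f 0 :=
    Finset.sum_range_sub f 12
  have sum_ge : ∑ i ∈ Finset.range 12, (5 - gg i - gg (i+1))
      ≤ ∑ i ∈ Finset.range 12, (f (i+1) - f i) := Finset.sum_le_sum key
  have S13 : ∑ i ∈ Finset.range 13, gg i = 18 := by
    have h1 : ∑ i ∈ Finset.range 13, gg i = ∑ i : Fin 13, (gw (x i) : ℤ) := by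
      rw [← Fin.sum_univ_eq_sum_range]
      exact Finset.sum_congr rfl fun i _ => by simp [gg]
    rw [h1]
    have h2 := Equiv.sum_comp e.toEquiv (fun v => (gw v : ℤ))
    rw [show (∑ i : Fin 13, (gw (x i) : ℤ)) = ∑ i : Fin 13, (gw (e.toEquiv i) : ℤ) from rfl]
    rw [h2, gw_sum]
  have hsplit : ∑ i ∈ Finset.range 12, (5 - gg i - gg (i+1))
      = 60 - (∑ i ∈ Finset.range 12, gg i) - (∑ i ∈ Finset.range 12, gg (i+1)) := by
    rw [show (fun i => 5 - gg i - gg (i+1)) = fun i => (5 - gg i) - gg (i+1) from rfl]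
    rw [Finset.sum_sub_distrib, Finset.sum_sub_distrib, Finset.sum_const]
    norm_num
  have e1 : ∑ i ∈ Finset.range 13, gg i = (∑ i ∈ Finset.range 12, gg i) + gg 12 :=
    Finset.sum_range_succ gg 12
  have e2 : ∑ i ∈ Finset.range 13, gg i = (∑ i ∈ Finset.range 12, gg (i+1)) + gg 0 :=
    Finset.sum_range_succ' gg 12
  have hend : 1 ≤ gg 0 + gg 12 := by
    have hne : x 0 ≠ x 12 := hxne 0 12 (by decide)
    have := gw_pos _ _ hne
    simp only [gg, dif_pos (show (0:ℕ) < 13 by omega), dif_pos (show (12:ℕ) < 13 by omega)]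
    push_cast
    omega
  have h0 : 1 ≤ f 0 := by
    simp only [f, dif_pos (show (0:ℕ) < 13 by omega)]
    exact_mod_cast hpos _
  have hsup : f 12 ≤ ((Finset.univ.sup c : ℕ) : ℤ) := by
    simp only [f, dif_pos (show (12:ℕ) < 13 by omega)]
    have := Finset.le_sup (f := c) (Finset.mem_univ (x 12))
    exact_mod_cast this
  have : (26 : ℤ) ≤ ((Finset.univ.sup c : ℕ) : ℤ) := by linarith
  exact_mod_cast this

/-- The radio number of the gear graph `G_6` is `26`. -/
theorem radioNumber_gear_6 : radioNumber (gearGraph 6) = 26 := by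
  have hmem : 26 ∈ {s : ℕ | ∃ c : GV → ℕ,
      IsRadioLabeling (gearGraph 6) c ∧ s = Finset.univ.sup c} :=
    ⟨cExp, isRadio_cExp, sup_cExp.symm⟩
  have hub : radioNumber (gearGraph 6) ≤ 26 := Nat.sInf_le hmem
  have hlb : 26 ≤ radioNumber (gearGraph 6) := le_csInf ⟨26, hmem⟩ lower_bound
  omega
end
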